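/- The power series expansion of Ξ(z) = ∏_{n=0}^∞ (1 - z^{2^n}) on the open unit disk has k-th coefficient ε_k = 1 - 2·t_k for k ≥ 1 (and constant term 1), where t_k is the Thue-Morse sequence (parity of binary digit sum of k); equivalently, Ξ(z) = ∑_{k=0}^∞ (-1)^{s(k)} z^k where s(k) is the binary digit sum of k. -/

import Mathlib

open Finset Filter Topology

private lemma dsum_rec (k : ℕ) :
    (Nat.digits 2 k).sum = k % 2 + (Nat.digits 2 (k / 2)).sum := by
  rcases Nat.eq_zero_or_pos k with h | h
  · simp [h]
  · rw [Nat.digits_def' (by norm_num) h, List.sum_cons]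

private lemma dsum_add_pow (N : ℕ) : ∀ k < 2 ^ N,
    (Nat.digits 2 (2 ^ N + k)).sum = (Nat.digits 2 k).sum + 1 := by
  induction N with
  | zero =>
    intro k hk
    interval_cases k
    simp
  | succ N ih =>
    intro k hk
    have h2 : (2:ℕ) ^ (N + 1) = 2 * 2 ^ N := by ring
    have hk2 : k / 2 < 2 ^ N := by omega
    have e1 : (2 ^ (N + 1) + k) % 2 = k % 2 := by omega
    have e2 : (2 ^ (N + 1) + k) / 2 = 2 ^ N + k / 2 := by omega
    rw [dsum_rec (2 ^ (N + 1) + k), e1, e2, ih _ hk2, dsum_rec k]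
    omega

private lemma partial_prod (z : ℂ) (N : ℕ) :
    ∏ n ∈ Finset.range N, (1 - z ^ 2 ^ n) =
      ∑ k ∈ Finset.range (2 ^ N), (-1 : ℂ) ^ (Nat.digits 2 k).sum * z ^ k := by
  induction N with
  | zero => simp
  | succ N ih =>
    have h2 : (2:ℕ) ^ (N + 1) = 2 ^ N + 2 ^ N := by ring
    rw [prod_range_succ, ih, h2, Finset.sum_range_add]
    have : ∀ k ∈ Finset.range (2 ^ N),
        (-1 : ℂ) ^ (Nat.digits 2 (2 ^ N + k)).sum * z ^ (2 ^ N + k) =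
          -(z ^ 2 ^ N) * ((-1 : ℂ) ^ (Nat.digits 2 k).sum * z ^ k) := by
      intro k hk
      rw [dsum_add_pow N k (Finset.mem_range.mp hk), pow_succ, pow_add]
      ring
    rw [Finset.sum_congr rfl this, ← Finset.mul_sum]
    ring

theorem stmt_12 :
    ∀ z : ℂ, ‖z‖ < 1 →
      ∏' n : ℕ, (1 - z ^ 2 ^ n) =
        ∑' k : ℕ, (-1 : ℂ) ^ (Nat.digits 2 k).sum * z ^ k := by
  intro z hz
  have hz0 : 0 ≤ ‖z‖ := norm_nonneg z
  -- summability of the power series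
  have hsum : Summable fun k : ℕ => (-1 : ℂ) ^ (Nat.digits 2 k).sum * z ^ k := by
    apply Summable.of_norm
    have : (fun k : ℕ => ‖(-1 : ℂ) ^ (Nat.digits 2 k).sum * z ^ k‖) =
        fun k : ℕ => ‖z‖ ^ k := by
      funext k
      rw [norm_mul, norm_pow, norm_pow, norm_neg, norm_one, one_pow, one_mul]
    rw [this]
    exact summable_geometric_of_lt_one hz0 hz
  have hT : Tendsto (fun N : ℕ => ∑ k ∈ Finset.range (2 ^ N),
      (-1 : ℂ) ^ (Nat.digits 2 k).sum * z ^ k) atTop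
      (𝓝 (∑' k : ℕ, (-1 : ℂ) ^ (Nat.digits 2 k).sum * z ^ k)) :=
    hsum.hasSum.tendsto_sum_nat.comp
      (tendsto_pow_atTop_atTop_of_one_lt one_lt_two)
  -- multipliability of the product
  have hnorm : ∀ n : ℕ, ‖z ^ 2 ^ n‖ < 1 := by
    intro n
    rw [norm_pow]
    exact pow_lt_one₀ hz0 hz (Nat.two_pow_pos n).ne'
  have hne : ∀ (x : Unit) (n : ℕ), (fun n (_ : Unit) => 1 - z ^ 2 ^ n) n x ≠ 0 := by
    intro _ n
    simp only [ne_eq, sub_eq_zero]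
    intro h
    have h1 := hnorm n
    rw [← h, norm_one] at h1
    exact lt_irrefl 1 h1
  have hlog : Summable fun n : ℕ => Complex.log (1 - z ^ 2 ^ n) := by
    apply Summable.of_norm_bounded_eventually_nat (g := fun n => 3 / 2 * ‖z‖ ^ n)
    · exact (summable_geometric_of_lt_one hz0 hz).mul_left _
    · have hev : ∀ᶠ n : ℕ in atTop, ‖z‖ ^ n ≤ 1 / 2 := by
        have ht : Tendsto (fun n : ℕ => ‖z‖ ^ n) atTop (𝓝 0) :=
          tendsto_pow_atTop_nhds_zero_of_lt_one hz0 hz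
        exact ht.eventually_le_const (by norm_num)
      filter_upwards [hev] with n hn
      have hle : ‖z‖ ^ 2 ^ n ≤ ‖z‖ ^ n :=
        pow_le_pow_of_le_one hz0 hz.le (Nat.le_of_lt (Nat.lt_two_pow_self (n := n)))
      have h12 : ‖-(z ^ 2 ^ n)‖ ≤ 1 / 2 := by
        rw [norm_neg, norm_pow]
        exact hle.trans hn
      have := Complex.norm_log_one_add_half_le_self h12
      rw [show (1 : ℂ) + -(z ^ 2 ^ n) = 1 - z ^ 2 ^ n by ring] at this
      refine this.trans ?_
      rw [norm_neg, norm_pow]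
      exact mul_le_mul_of_nonneg_left (hle.trans (le_refl _)) (by norm_num)
  have hmul : Multipliable fun n : ℕ => 1 - z ^ 2 ^ n :=
    Complex.multipliable_of_summable_log hlog
  have hP : Tendsto (fun N : ℕ => ∏ n ∈ Finset.range N, (1 - z ^ 2 ^ n)) atTop
      (𝓝 (∏' n : ℕ, (1 - z ^ 2 ^ n))) :=
    hmul.hasProd.tendsto_prod_nat
  have heq : (fun N : ℕ => ∏ n ∈ Finset.range N, (1 - z ^ 2 ^ n)) =
      fun N : ℕ => ∑ k ∈ Finset.range (2 ^ N),
        (-1 : ℂ) ^ (Nat.digits 2 k).sum * z ^ k :=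
    funext (partial_prod z)
  rw [heq] at hP
  exact tendsto_nhds_unique hP hT
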